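/- The two-qubit isotropic state $\rho = p\,\Psi^+ + (1-p)\frac{\mathbb{1}-\Psi^+}{3}$, for $p \in [0,1]$, is separable if and only if $p \le 1/2$; equivalently, written as $\rho = \lambda \Psi^+ + (1-\lambda)\mathbb{1}/4$ with $\lambda = (4p-1)/3$, it is separable iff $\lambda \le 1/3$. -/

import Mathlib

open scoped Matrix Kronecker ComplexOrder

/-- The two-qubit maximally entangled ket `(|00⟩ + |11⟩)/√2`. -/
noncomputable def psiVec : Fin 2 × Fin 2 → ℂ :=
  fun x => if x.1 = x.2 then ((1 / Real.sqrt 2 : ℝ) : ℂ) else 0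

/-- The projector `Ψ⁺` onto the two-qubit maximally entangled state. -/
noncomputable def PsiPlus : Matrix (Fin 2 × Fin 2) (Fin 2 × Fin 2) ℂ :=
  Matrix.vecMulVec psiVec (star ∘ psiVec)

/-- A two-qubit state is separable if it is a convex combination of product states. -/
def IsSeparableState (ρ : Matrix (Fin 2 × Fin 2) (Fin 2 × Fin 2) ℂ) : Prop :=
  ∃ (m : ℕ) (w : Fin m → ℝ) (A B : Fin m → Matrix (Fin 2) (Fin 2) ℂ),
    (∀ i, 0 ≤ w i) ∧ (∑ i, w i = 1) ∧
    (∀ i, (A i).PosSemidef ∧ (A i).trace = 1) ∧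
    (∀ i, (B i).PosSemidef ∧ (B i).trace = 1) ∧
    ρ = ∑ i, ((w i : ℝ) : ℂ) • (A i ⊗ₖ B i)

/-- The two-qubit isotropic state `p Ψ⁺ + (1-p)(𝟙 - Ψ⁺)/3`. -/
noncomputable def isoState (p : ℝ) : Matrix (Fin 2 × Fin 2) (Fin 2 × Fin 2) ℂ :=
  ((p : ℝ) : ℂ) • PsiPlus + (((1 - p) / 3 : ℝ) : ℂ) • ((1 : Matrix (Fin 2 × Fin 2) (Fin 2 × Fin 2) ℂ) - PsiPlus)

open Matrix Complex

lemma PsiPlus_apply (i j : Fin 2 × Fin 2) :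
    PsiPlus i j = if i.1 = i.2 ∧ j.1 = j.2 then (1/2 : ℂ) else 0 := by
  simp only [PsiPlus, Matrix.vecMulVec_apply, Function.comp, psiVec, Pi.star_apply]
  split_ifs with h1 h2 h3 h4 h5 <;> simp_all
  rw [← Complex.ofReal_inv, ← Complex.ofReal_mul]
  rw [show (√2)⁻¹ * (√2)⁻¹ = (2:ℝ)⁻¹ by rw [← mul_inv, Real.mul_self_sqrt] ; norm_num]
  norm_num

noncomputable def Pz0 : Matrix (Fin 2) (Fin 2) ℂ := !![1,0;0,0]
noncomputable def Pz1 : Matrix (Fin 2) (Fin 2) ℂ := !![0,0;0,1]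
noncomputable def Pxp : Matrix (Fin 2) (Fin 2) ℂ := !![1/2,1/2;1/2,1/2]
noncomputable def Pxm : Matrix (Fin 2) (Fin 2) ℂ := !![1/2,-(1/2);-(1/2),1/2]
noncomputable def Pyp : Matrix (Fin 2) (Fin 2) ℂ := !![1/2,-(I/2);I/2,1/2]
noncomputable def Pym : Matrix (Fin 2) (Fin 2) ℂ := !![1/2,I/2;-(I/2),1/2]

lemma Pz0_psd : Pz0.PosSemidef := by
  rw [show Pz0 = (!![(1:ℂ),0;0,0])ᴴ * !![(1:ℂ),0;0,0] by
    ext i j; fin_cases i <;> fin_cases j <;> simp [Matrix.mul_apply, Fin.sum_univ_two, Pz0]]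
  exact posSemidef_conjTranspose_mul_self _
lemma Pz1_psd : Pz1.PosSemidef := by
  rw [show Pz1 = (!![(0:ℂ),0;0,1])ᴴ * !![(0:ℂ),0;0,1] by
    ext i j; fin_cases i <;> fin_cases j <;> simp [Matrix.mul_apply, Fin.sum_univ_two, Pz1]]
  exact posSemidef_conjTranspose_mul_self _
lemma Pxp_psd : Pxp.PosSemidef := by
  rw [show Pxp = (!![(1/2:ℂ),1/2;1/2,1/2])ᴴ * !![(1/2:ℂ),1/2;1/2,1/2] by
    ext i j; fin_cases i <;> fin_cases j <;>
      simp [Matrix.mul_apply, Fin.sum_univ_two, Pxp] <;> ring_nf <;>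
      simp [Complex.ext_iff] <;> norm_num]
  exact posSemidef_conjTranspose_mul_self _
lemma Pxm_psd : Pxm.PosSemidef := by
  rw [show Pxm = (!![(1/2:ℂ),-(1/2);1/2,-(1/2)])ᴴ * !![(1/2:ℂ),-(1/2);1/2,-(1/2)] by
    ext i j; fin_cases i <;> fin_cases j <;>
      simp [Matrix.mul_apply, Fin.sum_univ_two, Pxm] <;> ring_nf <;>
      simp [Complex.ext_iff] <;> norm_num]
  exact posSemidef_conjTranspose_mul_self _
lemma Pyp_psd : Pyp.PosSemidef := by
  rw [show Pyp = (!![(1/2:ℂ),-(I/2);1/2,-(I/2)])ᴴ * !![(1/2:ℂ),-(I/2);1/2,-(I/2)] by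
    ext i j; fin_cases i <;> fin_cases j <;>
      simp [Matrix.mul_apply, Fin.sum_univ_two, Pyp] <;> ring_nf <;>
      simp [Complex.ext_iff] <;> norm_num]
  exact posSemidef_conjTranspose_mul_self _
lemma Pym_psd : Pym.PosSemidef := by
  rw [show Pym = (!![(1/2:ℂ),I/2;1/2,I/2])ᴴ * !![(1/2:ℂ),I/2;1/2,I/2] by
    ext i j; fin_cases i <;> fin_cases j <;>
      simp [Matrix.mul_apply, Fin.sum_univ_two, Pym] <;> ring_nf <;>
      simp [Complex.ext_iff] <;> norm_num]
  exact posSemidef_conjTranspose_mul_self _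

lemma Pz0_tr : Pz0.trace = 1 := by simp [Pz0, Matrix.trace_fin_two]
lemma Pz1_tr : Pz1.trace = 1 := by simp [Pz1, Matrix.trace_fin_two]
lemma Pxp_tr : Pxp.trace = 1 := by simp [Pxp, Matrix.trace_fin_two]; norm_num
lemma Pxm_tr : Pxm.trace = 1 := by simp [Pxm, Matrix.trace_fin_two]; norm_num
lemma Pyp_tr : Pyp.trace = 1 := by simp [Pyp, Matrix.trace_fin_two]; norm_num
lemma Pym_tr : Pym.trace = 1 := by simp [Pym, Matrix.trace_fin_two]; norm_num

set_option maxHeartbeats 1000000 in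
lemma iso_sep (p : ℝ) (hp0 : 0 ≤ p) (hp : p ≤ 1/2) : IsSeparableState (isoState p) := by
  refine ⟨12, ![p/3,p/3,p/3,p/3,p/3,p/3,(1-2*p)/6,(1-2*p)/6,(1-2*p)/6,(1-2*p)/6,(1-2*p)/6,(1-2*p)/6],
    ![Pz0,Pz1,Pxp,Pxm,Pyp,Pym, Pz0,Pz1,Pxp,Pxm,Pyp,Pym],
    ![Pz0,Pz1,Pxp,Pxm,Pym,Pyp, Pz1,Pz0,Pxm,Pxp,Pyp,Pym], ?_, ?_, ?_, ?_, ?_⟩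
  · intro i; fin_cases i <;>
      first
        | (show (0:ℝ) ≤ p/3; linarith)
        | (show (0:ℝ) ≤ (1-2*p)/6; linarith)
  · simp [Fin.sum_univ_succ]; ring
  · intro i; fin_cases i <;>
      exact ⟨by first
        | exact Pz0_psd | exact Pz1_psd | exact Pxp_psd | exact Pxm_psd
        | exact Pyp_psd | exact Pym_psd,
        by first
        | exact Pz0_tr | exact Pz1_tr | exact Pxp_tr | exact Pxm_tr
        | exact Pyp_tr | exact Pym_tr⟩
  · intro i; fin_cases i <;>
      exact ⟨by first
        | exact Pz0_psd | exact Pz1_psd | exact Pxp_psd | exact Pxm_psd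
        | exact Pyp_psd | exact Pym_psd,
        by first
        | exact Pz0_tr | exact Pz1_tr | exact Pxp_tr | exact Pxm_tr
        | exact Pyp_tr | exact Pym_tr⟩
  · ext ⟨i1,i2⟩ ⟨j1,j2⟩
    fin_cases i1 <;> fin_cases i2 <;> fin_cases j1 <;> fin_cases j2 <;>
    · simp only [isoState, Matrix.add_apply, Matrix.smul_apply, Matrix.sub_apply,
        Matrix.one_apply, PsiPlus_apply, Matrix.sum_apply, Fin.sum_univ_succ,
        Finset.univ_eq_empty, Finset.sum_empty, Matrix.kroneckerMap_apply, smul_eq_mul,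
        Matrix.cons_val_zero, Matrix.cons_val_succ, Fin.succ]
      norm_num [Pz0, Pz1, Pxp, Pxm, Pyp, Pym, Complex.ext_iff, Prod.ext_iff, Fin.ext_iff]
      all_goals first
        | ring
        | (constructor <;> ring)

lemma qubit_facts (A : Matrix (Fin 2) (Fin 2) ℂ) (h : A.PosSemidef) :
    A 0 0 = ((A 0 0).re : ℂ) ∧ A 1 1 = ((A 1 1).re : ℂ) ∧
    A 1 0 = (starRingEnd ℂ) (A 0 1) ∧
    0 ≤ (A 0 0).re ∧ 0 ≤ (A 1 1).re ∧
    Complex.normSq (A 0 1) ≤ (A 0 0).re * (A 1 1).re := by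
  obtain ⟨hH, hQ⟩ := Matrix.posSemidef_iff_dotProduct_mulVec.mp h
  have h00 : (starRingEnd ℂ) (A 0 0) = A 0 0 := by
    have := congrFun (congrFun hH 0) 0
    simpa [Matrix.conjTranspose_apply] using this
  have h11 : (starRingEnd ℂ) (A 1 1) = A 1 1 := by
    have := congrFun (congrFun hH 1) 1
    simpa [Matrix.conjTranspose_apply] using this
  have h10 : A 1 0 = (starRingEnd ℂ) (A 0 1) := by
    have := congrFun (congrFun hH 1) 0
    simpa [Matrix.conjTranspose_apply] using this.symm
  have hr00 : A 0 0 = ((A 0 0).re : ℂ) := by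
    rw [Complex.conj_eq_iff_re] at h00; exact h00.symm
  have hr11 : A 1 1 = ((A 1 1).re : ℂ) := by
    rw [Complex.conj_eq_iff_re] at h11; exact h11.symm
  set a := (A 0 0).re
  set d := (A 1 1).re
  set z := A 0 1
  set n := Complex.normSq z with hn
  have ha : 0 ≤ a := by
    have := hQ ![1, 0]
    rw [Complex.le_def] at this
    have e : (star ![(1:ℂ), 0]) ⬝ᵥ A *ᵥ ![1, 0] = A 0 0 := by
      simp [dotProduct, Matrix.mulVec, Fin.sum_univ_two]
    rw [e] at this
    simpa using this.1
  have hd : 0 ≤ d := by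
    have := hQ ![0, 1]
    rw [Complex.le_def] at this
    have e : (star ![(0:ℂ), 1]) ⬝ᵥ A *ᵥ ![0, 1] = A 1 1 := by
      simp [dotProduct, Matrix.mulVec, Fin.sum_univ_two]
    rw [e] at this
    simpa using this.1
  refine ⟨hr00, hr11, h10, ha, hd, ?_⟩
  have hq : ∀ s : ℝ, 0 ≤ d * (s * s) + (-2 * n) * s + a * n := by
    intro s
    have := hQ ![-z, (s : ℂ)]
    rw [Complex.le_def] at this
    have e : (star ![-z, (s:ℂ)]) ⬝ᵥ A *ᵥ ![-z, (s:ℂ)]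
        = ((d * (s*s) + (-2*n)*s + a*n : ℝ) : ℂ) := by
      simp only [dotProduct, Matrix.mulVec, Fin.sum_univ_two, Pi.star_apply,
        Matrix.cons_val_zero, Matrix.cons_val_one, Matrix.head_cons, star_neg,
        RCLike.star_def, map_neg, Complex.conj_ofReal]
      rw [hr00, hr11, h10]
      have e2 : (starRingEnd ℂ) z * z = (n : ℂ) := by
        rw [mul_comm, Complex.mul_conj]
      push_cast
      linear_combination ((a:ℂ) - 2*(s:ℂ)) * e2
    rw [e] at this
    simpa using this.1
  have hdisc := discrim_le_zero hq
  rw [discrim] at hdisc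
  have hnn : 0 ≤ n := Complex.normSq_nonneg z
  nlinarith [hnn, ha, hd, mul_nonneg ha hd]

lemma prod_bound (A B : Matrix (Fin 2) (Fin 2) ℂ)
    (hA : A.PosSemidef) (hAt : A.trace = 1)
    (hB : B.PosSemidef) (hBt : B.trace = 1) :
    (A 0 0 * B 0 0 + A 0 1 * B 0 1 + A 1 0 * B 1 0 + A 1 1 * B 1 1).re ≤ 1 := by
  obtain ⟨ha00, ha11, ha10, ha, hd, han⟩ := qubit_facts A hA
  obtain ⟨hb00, hb11, hb10, hb, he, hbn⟩ := qubit_facts B hB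
  set a := (A 0 0).re
  set d := (A 1 1).re
  set b := (B 0 0).re
  set e := (B 1 1).re
  set z := A 0 1
  set w := B 0 1
  have htrA : a + d = 1 := by
    have := congrArg Complex.re hAt
    simpa [Matrix.trace_fin_two] using this
  have htrB : b + e = 1 := by
    have := congrArg Complex.re hBt
    simpa [Matrix.trace_fin_two] using this
  have hre : (A 0 0 * B 0 0 + A 0 1 * B 0 1 + A 1 0 * B 1 0 + A 1 1 * B 1 1).re
      = a * b + d * e + 2 * (z * w).re := by
    rw [ha00, ha11, ha10, hb00, hb11, hb10]
    have : (starRingEnd ℂ) z * (starRingEnd ℂ) w = (starRingEnd ℂ) (z * w) := by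
      rw [_root_.map_mul]
    rw [this]
    simp [Complex.add_re, Complex.mul_re, Complex.conj_re, Complex.conj_im,
      Complex.ofReal_re, Complex.ofReal_im]
    ring
  rw [hre]
  have h1 : (z * w).re ≤ ‖z‖ * ‖w‖ := by
    calc (z * w).re ≤ ‖z * w‖ := Complex.re_le_norm _
    _ = ‖z‖ * ‖w‖ := norm_mul _ _
  have haz : (‖z‖) ^ 2 ≤ a * d := by rw [Complex.sq_norm]; exact han
  have hbw : (‖w‖) ^ 2 ≤ b * e := by rw [Complex.sq_norm]; exact hbn
  have h0z : 0 ≤ ‖z‖ := norm_nonneg _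
  have h0w : 0 ≤ ‖w‖ := norm_nonneg _
  set α := ‖z‖
  set β := ‖w‖
  have hstep1 : (α * β) ^ 2 ≤ (a * d) * (b * e) := by
    calc (α * β)^2 = α^2 * β^2 := by ring
    _ ≤ (a*d) * (b*e) :=
      mul_le_mul haz hbw (sq_nonneg β) (mul_nonneg ha hd)
  have hstep2 : (2 * (α * β)) ^ 2 ≤ (a*e + d*b) ^ 2 := by
    nlinarith [sq_nonneg (a*e - d*b)]
  have hstep3 : 2 * (α * β) ≤ a*e + d*b := by
    have h2ab : 0 ≤ 2 * (α * β) := by positivity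
    have hae : 0 ≤ a*e + d*b := by positivity
    nlinarith [hstep2, h2ab, hae]
  nlinarith [h1, hstep3, mul_nonneg h0z h0w]

lemma iso_sep_imp (p : ℝ) (h : IsSeparableState (isoState p)) : p ≤ 1 / 2 := by
  obtain ⟨m, w, A, B, hw0, hw1, hA, hB, hρ⟩ := h
  have H := congrArg (fun M : Matrix (Fin 2 × Fin 2) (Fin 2 × Fin 2) ℂ =>
    ((M (0,0) (0,0) + M (0,0) (1,1) + M (1,1) (0,0) + M (1,1) (1,1)).re)) hρ
  simp only [isoState, Matrix.add_apply, Matrix.smul_apply, Matrix.sub_apply,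
    Matrix.one_apply, PsiPlus_apply, Matrix.sum_apply, Matrix.kroneckerMap_apply,
    smul_eq_mul] at H
  norm_num [Prod.ext_iff, Complex.add_re] at H
  rw [← Finset.sum_add_distrib, ← Finset.sum_add_distrib, ← Finset.sum_add_distrib] at H
  have H2 : 2 * p = ∑ x, w x *
      ((A x 0 0 * B x 0 0 + A x 0 1 * B x 0 1 + A x 1 0 * B x 1 0 + A x 1 1 * B x 1 1).re) := by
    rw [show (2:ℝ) * p = p * (1 / 2) + (1 - p) / 3 * (1 / 2) + (p * (1 / 2) + -((1 - p) / 3 * (1 / 2))) +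
        (p * (1 / 2) + -((1 - p) / 3 * (1 / 2))) +
      (p * (1 / 2) + (1 - p) / 3 * (1 / 2)) from by ring, H]
    refine Finset.sum_congr rfl (fun x _ => ?_)
    simp only [Complex.add_re, Complex.mul_re]
    ring
  have hle : ∑ x, w x *
      ((A x 0 0 * B x 0 0 + A x 0 1 * B x 0 1 + A x 1 0 * B x 1 0 + A x 1 1 * B x 1 1).re)
      ≤ ∑ x, w x := by
    refine Finset.sum_le_sum (fun i _ => ?_)
    have hb := prod_bound (A i) (B i) (hA i).1 (hA i).2 (hB i).1 (hB i).2
    nlinarith [hw0 i, hb]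
  rw [hw1] at hle
  linarith

theorem isotropic_separability (p : ℝ) (hp0 : 0 ≤ p) (hp1 : p ≤ 1) :
    (IsSeparableState (isoState p) ↔ p ≤ 1 / 2) ∧
    (IsSeparableState ((((4 * p - 1) / 3 : ℝ) : ℂ) • PsiPlus +
        (((1 - (4 * p - 1) / 3) / 4 : ℝ) : ℂ) • (1 : Matrix (Fin 2 × Fin 2) (Fin 2 × Fin 2) ℂ)) ↔
      (4 * p - 1) / 3 ≤ 1 / 3) := by
  have hmat : ((((4 * p - 1) / 3 : ℝ) : ℂ) • PsiPlus +
      (((1 - (4 * p - 1) / 3) / 4 : ℝ) : ℂ) • (1 : Matrix (Fin 2 × Fin 2) (Fin 2 × Fin 2) ℂ))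
      = isoState p := by
    ext i j
    simp only [isoState, Matrix.add_apply, Matrix.smul_apply, Matrix.sub_apply,
      Matrix.one_apply, smul_eq_mul]
    push_cast
    ring
  constructor
  · exact ⟨iso_sep_imp p, fun h => iso_sep p hp0 h⟩
  · rw [hmat]
    constructor
    · intro h; have := iso_sep_imp p h; linarith
    · intro h; exact iso_sep p hp0 (by linarith)
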